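/- Let d, n, m, p, k be positive integers and let D : ℝ^d → ℂ^{n×n}, B : ℝ^d → ℂ^{n×m}, C : ℝ^d → ℂ^{p×n} be differentiable at a point μ₀ ∈ ℝ^d. Fix V, W ∈ ℂ^{n×k} and assume: D(μ₀) is invertible, Wᴴ D(μ₀) V is invertible, and there exist X ∈ ℂ^{k×m} and Y ∈ ℂ^{k×p} with D(μ₀)⁻¹ B(μ₀) = V X and (D(μ₀)ᴴ)⁻¹ C(μ₀)ᴴ = W Y. Define H(μ) := C(μ) D(μ)⁻¹ B(μ) and Hʳ(μ) := (C(μ) V)(Wᴴ D(μ) V)⁻¹ (Wᴴ B(μ)). Then H(μ₀) = Hʳ(μ₀), both H and Hʳ are differentiable at μ₀, and their Fréchet derivatives at μ₀ coincide. -/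

import Mathlib

open Matrix

attribute [local instance] Matrix.normedAddCommGroup Matrix.normedSpace

variable {E : Type*} [NormedAddCommGroup E] [NormedSpace ℝ E] {x : E}
variable {a b c : Type*} [Fintype a] [Fintype b] [Fintype c] [DecidableEq a] [DecidableEq b]

theorem diffEntry {f : E → Matrix a b ℂ} (hf : DifferentiableAt ℝ f x) (i : a) (j : b) :
    DifferentiableAt ℝ (fun μ => f μ i j) x := by
  have h1 : DifferentiableAt ℝ (fun μ => f μ i) x := (differentiableAt_pi.mp hf) i
  exact (differentiableAt_pi.mp h1) j

theorem diffOfEntries {f : E → Matrix a b ℂ}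
    (hf : ∀ i j, DifferentiableAt ℝ (fun μ => f μ i j) x) : DifferentiableAt ℝ f x :=
  differentiableAt_pi.mpr fun i => differentiableAt_pi.mpr fun j => hf i j

set_option linter.unusedSectionVars false

theorem diffMul [DecidableEq c] {f : E → Matrix a b ℂ} {g : E → Matrix b c ℂ}
    (hf : DifferentiableAt ℝ f x) (hg : DifferentiableAt ℝ g x) :
    DifferentiableAt ℝ (fun μ => f μ * g μ) x := by
  refine diffOfEntries fun i j => ?_
  simp only [Matrix.mul_apply]
  exact DifferentiableAt.fun_sum fun l _ => (diffEntry hf i l).fun_mul (diffEntry hg l j)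

theorem diffDet {f : E → Matrix a a ℂ} (hf : DifferentiableAt ℝ f x) :
    DifferentiableAt ℝ (fun μ => (f μ).det) x := by
  simp only [Matrix.det_apply']
  refine DifferentiableAt.fun_sum fun σ _ => (differentiableAt_const _).fun_mul ?_
  exact (HasFDerivAt.finset_prod fun l (_ : l ∈ Finset.univ) => (diffEntry hf (σ l) l).hasFDerivAt).differentiableAt

theorem diffAdjugate {f : E → Matrix a a ℂ} (hf : DifferentiableAt ℝ f x) :
    DifferentiableAt ℝ (fun μ => (f μ).adjugate) x := by
  refine diffOfEntries fun i j => ?_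
  simp only [Matrix.adjugate_apply]
  refine diffDet (diffOfEntries fun i' j' => ?_)
  rcases eq_or_ne i' j with rfl | h
  · simp only [Matrix.updateRow_self]
    exact differentiableAt_const _
  · simp only [Matrix.updateRow_ne h]
    exact diffEntry hf i' j'

theorem diffInv {f : E → Matrix a a ℂ} (hf : DifferentiableAt ℝ f x)
    (hu : IsUnit (f x)) : DifferentiableAt ℝ (fun μ => (f μ)⁻¹) x := by
  have hdet : (f x).det ≠ 0 := ((Matrix.isUnit_iff_isUnit_det _).mp hu).ne_zero
  have : (fun μ => (f μ)⁻¹) = fun μ => ((f μ).det)⁻¹ • (f μ).adjugate := by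
    funext μ; rw [Matrix.inv_def, Ring.inverse_eq_inv']
  rw [this]
  exact ((diffDet hf).inv hdet).smul (diffAdjugate hf)

theorem hasFDerivMulZero [DecidableEq c] {f : E → Matrix a b ℂ} {g : E → Matrix b c ℂ}
    (hf : DifferentiableAt ℝ f x) (hg : DifferentiableAt ℝ g x)
    (h0f : f x = 0) (h0g : g x = 0) :
    HasFDerivAt (fun μ => f μ * g μ) (0 : E →L[ℝ] Matrix a c ℂ) x := by
  refine hasFDerivAt_pi'.mpr fun i => ?_
  refine hasFDerivAt_pi'.mpr fun j => ?_
  change HasFDerivAt _ (0 : E →L[ℝ] ℂ) x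
  have each : ∀ l, HasFDerivAt (fun μ => f μ i l * g μ l j) (0 : E →L[ℝ] ℂ) x := by
    intro l
    have h := (diffEntry hf i l).hasFDerivAt.mul (diffEntry hg l j).hasFDerivAt
    have e1 : f x i l = 0 := by simp [h0f]
    have e2 : g x l j = 0 := by simp [h0g]
    refine h.congr_fderiv ?_
    ext v
    simp [e1, e2]
  have key : HasFDerivAt (fun μ => ∑ l, f μ i l * g μ l j) (0 : E →L[ℝ] ℂ) x := by
    have := HasFDerivAt.fun_sum (u := Finset.univ) (fun l (_ : l ∈ Finset.univ) => each l)
    simpa using this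
  simpa only [Matrix.mul_apply] using key

theorem keyIdentity {n' k' m' p' : Type} [Fintype n'] [Fintype k'] [Fintype m'] [Fintype p'] [DecidableEq n'] [DecidableEq k']
    (Dm P : Matrix n' n' ℂ) (Bm : Matrix n' m' ℂ) (Cm : Matrix p' n' ℂ)
    (V W : Matrix n' k' ℂ) (Q : Matrix k' k' ℂ)
    (h1 : Dm * P = 1) (h2 : P * Dm = 1) (h3 : (Wᴴ * Dm * V) * Q = 1) :
    Cm * P * Bm = (Cm * V) * Q * (Wᴴ * Bm) +
      (Cm * P - Cm * V * Q * Wᴴ) * (Dm * (P * Bm - V * (Q * (Wᴴ * Bm)))) := by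
  have r1 : ∀ {q : Type} [Fintype q] (M : Matrix n' q ℂ), Dm * (P * M) = M := fun M => by
    rw [← Matrix.mul_assoc, h1, Matrix.one_mul]
  have r2 : ∀ {q : Type} [Fintype q] (M : Matrix n' q ℂ), P * (Dm * M) = M := fun M => by
    rw [← Matrix.mul_assoc, h2, Matrix.one_mul]
  have r3 : ∀ {q : Type} [Fintype q] (M : Matrix k' q ℂ),
      Wᴴ * (Dm * (V * (Q * M))) = M := fun M => by
    rw [← Matrix.mul_assoc, ← Matrix.mul_assoc, ← Matrix.mul_assoc, h3, Matrix.one_mul]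
  simp only [Matrix.mul_sub, Matrix.sub_mul, Matrix.mul_assoc, r1, r2, r3]
  abel


/-- **Hermite interpolation in the parameter.**
Let `D, B, C` be matrix-valued functions of a parameter `μ ∈ ℝ^d`, differentiable at `μ₀`,
with `D μ₀` and `Wᴴ D(μ₀) V` invertible, and suppose the two-sided subspace conditions
`D(μ₀)⁻¹ B(μ₀) = V X` and `(D(μ₀)ᴴ)⁻¹ C(μ₀)ᴴ = W Y` hold. Then the full transfer function
`H(μ) = C(μ) D(μ)⁻¹ B(μ)` and the reduced one
`Hʳ(μ) = (C(μ) V)(Wᴴ D(μ) V)⁻¹ (Wᴴ B(μ))` agree at `μ₀`, are both differentiable at `μ₀`,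
and have the same (Fréchet) derivative there. -/
theorem stmt4 {d n m p k : ℕ} (hd : 0 < d) (hn : 0 < n) (hm : 0 < m) (hp : 0 < p)
    (hk : 0 < k)
    (D : (Fin d → ℝ) → Matrix (Fin n) (Fin n) ℂ)
    (B : (Fin d → ℝ) → Matrix (Fin n) (Fin m) ℂ)
    (C : (Fin d → ℝ) → Matrix (Fin p) (Fin n) ℂ)
    (μ₀ : Fin d → ℝ)
    (hD : DifferentiableAt ℝ D μ₀) (hB : DifferentiableAt ℝ B μ₀)
    (hC : DifferentiableAt ℝ C μ₀)
    (V W : Matrix (Fin n) (Fin k) ℂ)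
    (hinv : IsUnit (D μ₀)) (hred : IsUnit (Wᴴ * D μ₀ * V))
    (X : Matrix (Fin k) (Fin m) ℂ) (hX : (D μ₀)⁻¹ * B μ₀ = V * X)
    (Y : Matrix (Fin k) (Fin p) ℂ) (hY : ((D μ₀)ᴴ)⁻¹ * (C μ₀)ᴴ = W * Y) :
    (fun μ => C μ * (D μ)⁻¹ * B μ) μ₀ =
        (fun μ => (C μ * V) * (Wᴴ * D μ * V)⁻¹ * (Wᴴ * B μ)) μ₀ ∧
      DifferentiableAt ℝ (fun μ => C μ * (D μ)⁻¹ * B μ) μ₀ ∧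
      DifferentiableAt ℝ (fun μ => (C μ * V) * (Wᴴ * D μ * V)⁻¹ * (Wᴴ * B μ)) μ₀ ∧
      fderiv ℝ (fun μ => C μ * (D μ)⁻¹ * B μ) μ₀ =
        fderiv ℝ (fun μ => (C μ * V) * (Wᴴ * D μ * V)⁻¹ * (Wᴴ * B μ)) μ₀ := by
  have hdD : IsUnit (D μ₀).det := (Matrix.isUnit_iff_isUnit_det _).mp hinv
  have hdK : IsUnit (Wᴴ * D μ₀ * V).det := (Matrix.isUnit_iff_isUnit_det _).mp hred
  have hD1 : D μ₀ * (D μ₀)⁻¹ = 1 := Matrix.mul_nonsing_inv _ hdD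
  have hD2 : (D μ₀)⁻¹ * D μ₀ = 1 := Matrix.nonsing_inv_mul _ hdD
  have hK1 : (Wᴴ * D μ₀ * V) * (Wᴴ * D μ₀ * V)⁻¹ = 1 := Matrix.mul_nonsing_inv _ hdK
  have hK2 : (Wᴴ * D μ₀ * V)⁻¹ * (Wᴴ * D μ₀ * V) = 1 := Matrix.nonsing_inv_mul _ hdK
  -- differentiability pieces
  have hDi : DifferentiableAt ℝ (fun μ => (D μ)⁻¹) μ₀ := diffInv hD hinv
  have hKd : DifferentiableAt ℝ (fun μ => Wᴴ * D μ * V) μ₀ :=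
    diffMul (diffMul (differentiableAt_const _) hD) (differentiableAt_const _)
  have hKi : DifferentiableAt ℝ (fun μ => (Wᴴ * D μ * V)⁻¹) μ₀ := diffInv hKd hred
  have hHd : DifferentiableAt ℝ (fun μ => C μ * (D μ)⁻¹ * B μ) μ₀ :=
    diffMul (diffMul hC hDi) hB
  have hHrd : DifferentiableAt ℝ (fun μ => (C μ * V) * (Wᴴ * D μ * V)⁻¹ * (Wᴴ * B μ)) μ₀ :=
    diffMul (diffMul (diffMul hC (differentiableAt_const _)) hKi)
      (diffMul (differentiableAt_const _) hB)
  -- basic algebra at μ₀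
  have hB0 : B μ₀ = D μ₀ * (V * X) := by
    calc B μ₀ = (D μ₀ * (D μ₀)⁻¹) * B μ₀ := by rw [hD1, Matrix.one_mul]
    _ = D μ₀ * ((D μ₀)⁻¹ * B μ₀) := Matrix.mul_assoc _ _ _
    _ = D μ₀ * (V * X) := by rw [hX]
  have hdDH : IsUnit ((D μ₀)ᴴ).det := by
    rw [Matrix.det_conjTranspose]; exact hdD.star
  have hC0 : C μ₀ = Yᴴ * Wᴴ * D μ₀ := by
    have h1 : (C μ₀)ᴴ = (D μ₀)ᴴ * (W * Y) := by
      calc (C μ₀)ᴴ = ((D μ₀)ᴴ * ((D μ₀)ᴴ)⁻¹) * (C μ₀)ᴴ := by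
            rw [Matrix.mul_nonsing_inv _ hdDH, Matrix.one_mul]
      _ = (D μ₀)ᴴ * (((D μ₀)ᴴ)⁻¹ * (C μ₀)ᴴ) := Matrix.mul_assoc _ _ _
      _ = (D μ₀)ᴴ * (W * Y) := by rw [hY]
    calc C μ₀ = ((C μ₀)ᴴ)ᴴ := (Matrix.conjTranspose_conjTranspose _).symm
    _ = ((D μ₀)ᴴ * (W * Y))ᴴ := by rw [h1]
    _ = (W * Y)ᴴ * ((D μ₀)ᴴ)ᴴ := Matrix.conjTranspose_mul _ _
    _ = Yᴴ * Wᴴ * D μ₀ := by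
        rw [Matrix.conjTranspose_mul, Matrix.conjTranspose_conjTranspose]
  have hWB : Wᴴ * B μ₀ = (Wᴴ * D μ₀ * V) * X := by
    rw [hB0]; simp only [Matrix.mul_assoc]
  -- value equality
  have hval : C μ₀ * (D μ₀)⁻¹ * B μ₀ = (C μ₀ * V) * (Wᴴ * D μ₀ * V)⁻¹ * (Wᴴ * B μ₀) := by
    rw [Matrix.mul_assoc (C μ₀), hX, hWB, Matrix.mul_assoc (C μ₀ * V),
      ← Matrix.mul_assoc ((Wᴴ * D μ₀ * V)⁻¹), hK2, Matrix.one_mul, ← Matrix.mul_assoc]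
  -- the error factors
  have hfd : DifferentiableAt ℝ
      (fun μ => C μ * (D μ)⁻¹ - C μ * V * (Wᴴ * D μ * V)⁻¹ * Wᴴ) μ₀ :=
    (diffMul hC hDi).sub
      (diffMul (diffMul (diffMul hC (differentiableAt_const _)) hKi) (differentiableAt_const _))
  have hgd : DifferentiableAt ℝ
      (fun μ => (D μ)⁻¹ * B μ - V * ((Wᴴ * D μ * V)⁻¹ * (Wᴴ * B μ))) μ₀ :=
    (diffMul hDi hB).sub
      (diffMul (differentiableAt_const _) (diffMul hKi (diffMul (differentiableAt_const _) hB)))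
  have hf0 : C μ₀ * (D μ₀)⁻¹ - C μ₀ * V * (Wᴴ * D μ₀ * V)⁻¹ * Wᴴ = 0 := by
    have e1 : C μ₀ * (D μ₀)⁻¹ = Yᴴ * Wᴴ := by
      rw [hC0, Matrix.mul_assoc (Yᴴ * Wᴴ), hD1, Matrix.mul_one]
    have e2 : C μ₀ * V * (Wᴴ * D μ₀ * V)⁻¹ * Wᴴ = Yᴴ * Wᴴ := by
      have ha : Yᴴ * Wᴴ * D μ₀ * V = Yᴴ * (Wᴴ * D μ₀ * V) := by
        rw [Matrix.mul_assoc Yᴴ Wᴴ (D μ₀), Matrix.mul_assoc Yᴴ (Wᴴ * D μ₀) V]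
      rw [hC0, ha, Matrix.mul_assoc Yᴴ (Wᴴ * D μ₀ * V) ((Wᴴ * D μ₀ * V)⁻¹), hK1,
        Matrix.mul_one]
    rw [e1, e2, sub_self]
  have hg0 : (D μ₀)⁻¹ * B μ₀ - V * ((Wᴴ * D μ₀ * V)⁻¹ * (Wᴴ * B μ₀)) = 0 := by
    rw [hX, hWB, ← Matrix.mul_assoc ((Wᴴ * D μ₀ * V)⁻¹), hK2, Matrix.one_mul, sub_self]
  -- eventual invertibility
  have hevD : ∀ᶠ μ in nhds μ₀, IsUnit (D μ).det := by
    have hc : ContinuousAt (fun μ => (D μ).det) μ₀ :=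
      (Continuous.matrix_det continuous_id).continuousAt.comp hD.continuousAt
    exact (hc.eventually_ne hdD.ne_zero).mono fun μ h => isUnit_iff_ne_zero.mpr h
  have hevK : ∀ᶠ μ in nhds μ₀, IsUnit (Wᴴ * D μ * V).det := by
    have hc : ContinuousAt (fun μ => (Wᴴ * D μ * V).det) μ₀ :=
      (Continuous.matrix_det continuous_id).continuousAt.comp hKd.continuousAt
    exact (hc.eventually_ne hdK.ne_zero).mono fun μ h => isUnit_iff_ne_zero.mpr h
  -- eventual identity
  have hEq : (fun μ => C μ * (D μ)⁻¹ * B μ) =ᶠ[nhds μ₀]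
      (fun μ => (C μ * V) * (Wᴴ * D μ * V)⁻¹ * (Wᴴ * B μ) +
        (C μ * (D μ)⁻¹ - C μ * V * (Wᴴ * D μ * V)⁻¹ * Wᴴ) *
          (D μ * ((D μ)⁻¹ * B μ - V * ((Wᴴ * D μ * V)⁻¹ * (Wᴴ * B μ))))) := by
    filter_upwards [hevD, hevK] with μ h1 h2
    have e1 : D μ * (D μ)⁻¹ = 1 := Matrix.mul_nonsing_inv _ h1
    have e2 : (D μ)⁻¹ * D μ = 1 := Matrix.nonsing_inv_mul _ h1
    have e3 : (Wᴴ * D μ * V) * (Wᴴ * D μ * V)⁻¹ = 1 := Matrix.mul_nonsing_inv _ h2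
    exact keyIdentity (D μ) ((D μ)⁻¹) (B μ) (C μ) V W ((Wᴴ * D μ * V)⁻¹) e1 e2 e3
  -- zero derivative of the error term
  have hDg0 : D μ₀ * ((D μ₀)⁻¹ * B μ₀ - V * ((Wᴴ * D μ₀ * V)⁻¹ * (Wᴴ * B μ₀))) = 0 := by
    rw [hg0, Matrix.mul_zero]
  have hzero : fderiv ℝ
      (fun μ => (C μ * (D μ)⁻¹ - C μ * V * (Wᴴ * D μ * V)⁻¹ * Wᴴ) *
        (D μ * ((D μ)⁻¹ * B μ - V * ((Wᴴ * D μ * V)⁻¹ * (Wᴴ * B μ))))) μ₀ = 0 :=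
    (hasFDerivMulZero hfd (diffMul hD hgd) hf0 hDg0).fderiv
  refine ⟨hval, hHd, hHrd, ?_⟩
  calc fderiv ℝ (fun μ => C μ * (D μ)⁻¹ * B μ) μ₀
      = fderiv ℝ (fun μ => (C μ * V) * (Wᴴ * D μ * V)⁻¹ * (Wᴴ * B μ) +
          (C μ * (D μ)⁻¹ - C μ * V * (Wᴴ * D μ * V)⁻¹ * Wᴴ) *
            (D μ * ((D μ)⁻¹ * B μ - V * ((Wᴴ * D μ * V)⁻¹ * (Wᴴ * B μ))))) μ₀ :=
        Filter.EventuallyEq.fderiv_eq hEq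
    _ = fderiv ℝ (fun μ => (C μ * V) * (Wᴴ * D μ * V)⁻¹ * (Wᴴ * B μ)) μ₀ := by
        exact (fderiv_fun_add hHrd (diffMul hfd (diffMul hD hgd))).trans ((congrArg (fun L => fderiv ℝ (fun μ => (C μ * V) * (Wᴴ * D μ * V)⁻¹ * (Wᴴ * B μ)) μ₀ + L) hzero).trans (add_zero _))
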